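/- Let β̂_1, …, β̂_J ∈ ℝ^d satisfy ‖β̂_j − β_j‖₂ ≤ ϱ for some β_j in a linear subspace 𝓘 ⊆ ℝ^d, and let 𝓢 be the convex hull of the points {±β̂_j}_{j=1}^J. Let B be a symmetric positive-definite matrix such that the ellipsoid 𝓔₁(B) = {x ∈ ℝ^d : xᵀBx ≤ 1} is inscribed in 𝓢 (i.e. 𝓔₁(B) ⊆ 𝓢). Then for any unit vector v orthogonal to 𝓘 it holds vᵀB⁻¹v ≤ ϱ². -/

import Mathlib

open Matrix

/-- The Euclidean norm on ℝ^d. -/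
noncomputable def euclNorm {d : ℕ} (x : Fin d → ℝ) : ℝ := Real.sqrt (∑ i, x i ^ 2)

/-- if the β̂_j are ϱ-close to points β_j of a subspace 𝓘 and the
ellipsoid 𝓔₁(B) is inscribed in the convex hull 𝓢 of {±β̂_j}, then for every
unit vector v orthogonal to 𝓘 one has vᵀB⁻¹v ≤ ϱ². -/
theorem stmt3 {d J : ℕ} (hJ : 0 < J) (ϱ : ℝ)
    (I : Submodule ℝ (Fin d → ℝ))
    (βhat β : Fin J → Fin d → ℝ)
    (hβ : ∀ j, β j ∈ I) (hclose : ∀ j, euclNorm (βhat j - β j) ≤ ϱ)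
    (B : Matrix (Fin d) (Fin d) ℝ) (hB : B.PosDef)
    (hincl : {x : Fin d → ℝ | x ⬝ᵥ B.mulVec x ≤ 1} ⊆
      convexHull ℝ {y : Fin d → ℝ | ∃ j, y = βhat j ∨ y = -βhat j}) :
    ∀ v : Fin d → ℝ, euclNorm v = 1 → (∀ w ∈ I, v ⬝ᵥ w = 0) →
      v ⬝ᵥ B⁻¹.mulVec v ≤ ϱ ^ 2 := by
  intro v hv hvI
  have hv0 : v ≠ 0 := by
    intro h
    rw [h] at hv
    simp [euclNorm] at hv
  -- v ⬝ᵥ B⁻¹ v > 0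
  have hBinv : (B⁻¹).PosDef := hB.inv
  have hq : 0 < v ⬝ᵥ B⁻¹.mulVec v := by
    have := hBinv.re_dotProduct_pos hv0
    simpa using this
  set q : ℝ := v ⬝ᵥ B⁻¹.mulVec v with hqdef
  set t : ℝ := Real.sqrt q with htdef
  have ht : 0 < t := Real.sqrt_pos.2 hq
  have ht2 : t ^ 2 = q := Real.sq_sqrt hq.le
  -- Cauchy-Schwarz bound : for any j, |v ⬝ᵥ βhat j| ≤ ϱ
  have hsumv : (∑ i, v i ^ 2) = 1 := by
    have h1 : Real.sqrt (∑ i, v i ^ 2) = 1 := hv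
    have hnn : (0:ℝ) ≤ ∑ i, v i ^ 2 := Finset.sum_nonneg fun i _ => sq_nonneg (v i)
    have h2 := Real.sq_sqrt hnn
    rw [h1] at h2
    simpa using h2.symm
  have hϱ : 0 ≤ ϱ := le_trans (Real.sqrt_nonneg _) (hclose ⟨0, hJ⟩)
  have hbound : ∀ j, |v ⬝ᵥ βhat j| ≤ ϱ := by
    intro j
    have horth : v ⬝ᵥ β j = 0 := hvI (β j) (hβ j)
    have heq : v ⬝ᵥ βhat j = v ⬝ᵥ (βhat j - β j) := by
      rw [dotProduct_sub, horth, sub_zero]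
    rw [heq]
    have hcs := Finset.sum_mul_sq_le_sq_mul_sq Finset.univ v (βhat j - β j)
    have : (v ⬝ᵥ (βhat j - β j)) ^ 2 ≤ ∑ i, (βhat j - β j) i ^ 2 := by
      calc (v ⬝ᵥ (βhat j - β j)) ^ 2 ≤ (∑ i, v i ^ 2) * ∑ i, (βhat j - β j) i ^ 2 := hcs
        _ = ∑ i, (βhat j - β j) i ^ 2 := by rw [hsumv, one_mul]
    have h2 : |v ⬝ᵥ (βhat j - β j)| ≤ Real.sqrt (∑ i, (βhat j - β j) i ^ 2) := by
      rw [← Real.sqrt_sq_eq_abs]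
      exact Real.sqrt_le_sqrt this
    exact h2.trans (hclose j)
  -- every point of the convex hull S satisfies v ⬝ᵥ y ≤ ϱ
  have hlin : IsLinearMap ℝ (fun y : Fin d → ℝ => v ⬝ᵥ y) :=
    ⟨fun a b => dotProduct_add v a b, fun c a => by simp [dotProduct_smul]⟩
  have hhull : convexHull ℝ {y : Fin d → ℝ | ∃ j, y = βhat j ∨ y = -βhat j} ⊆
      {y | v ⬝ᵥ y ≤ ϱ} := by
    apply convexHull_min
    · rintro y ⟨j, hj | hj⟩
      · rw [hj]; exact (le_abs_self _).trans (hbound j)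
      · rw [hj]
        show v ⬝ᵥ -βhat j ≤ ϱ
        have h3 : v ⬝ᵥ -βhat j = -(v ⬝ᵥ βhat j) := by simp
        rw [h3]
        exact (neg_le_abs _).trans (hbound j)
    · exact convex_halfSpace_le hlin ϱ
  -- take x = t⁻¹ • (B⁻¹ v) : it lies on the ellipsoid
  have hinvB : Invertible B := hB.isUnit.invertible
  have hBBinv : B.mulVec (B⁻¹.mulVec v) = v := by
    rw [mulVec_mulVec, Matrix.mul_nonsing_inv _ (isUnit_iff_isUnit_det _ |>.1 hB.isUnit),
      one_mulVec]
  set x : Fin d → ℝ := t⁻¹ • (B⁻¹.mulVec v) with hxdef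
  have hxell : x ⬝ᵥ B.mulVec x = 1 := by
    rw [hxdef]
    rw [mulVec_smul, dotProduct_smul, smul_dotProduct, hBBinv]
    have : B⁻¹.mulVec v ⬝ᵥ v = q := by rw [dotProduct_comm]
    rw [this]
    field_simp
    rw [← ht2]; ring_nf; rw [← mul_pow, mul_inv_cancel₀ ht.ne', one_pow]
  have hxS := hincl (by rw [Set.mem_setOf_eq, hxell])
  have hx : v ⬝ᵥ x ≤ ϱ := hhull hxS
  have hvx : v ⬝ᵥ x = t := by
    rw [hxdef, dotProduct_smul, smul_eq_mul, ← hqdef, ← ht2, sq, ← mul_assoc,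
      inv_mul_cancel₀ ht.ne', one_mul]
  rw [hvx] at hx
  calc q = t ^ 2 := ht2.symm
    _ ≤ ϱ ^ 2 := by
      apply pow_le_pow_left₀ ht.le hx
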